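/- Proposition 1 (kernel ELBO lower-bounds the graph log-likelihood in the data-augmentation model): let N, l be natural numbers and λ a real number with 0 < λ ≤ π. Let Z be a measurable space, p (prior) and q (posterior) probability measures on Z with q ≪ p and KL(q‖p) < ∞. Let Ã : Z → ℝ^{N×N} be a measurable decoder with 0 < Ã(z)_{ij} < 1 for all z, i, j, let φ be a measurable map from real N×N matrices to ℝ^l, and let A ∈ {0,1}^{N×N} be a fixed Boolean adjacency matrix with real 0/1 version B(A). Define: the link reconstruction probability p_link(z) = ∏_{i,j} Ã(z)_{ij}^{A_{ij}} (1−Ã(z)_{ij})^{1−A_{ij}}; the feature likelihood ρ(z) = ρ_{φ(Ã(z)),λ}(φ(B(A))); the normalization constant C(z) = Σ_{A' ∈ {0,1}^{N×N}} (∏_{i,j} Ã(z)_{ij}^{A'_{ij}} (1−Ã(z)_{ij})^{1−A'_{ij}}) · ρ_{φ(Ã(z)),λ}(φ(B(A'))); the joint reconstruction probability p(A|z) = p_link(z)·ρ(z)/C(z); the marginal likelihood P(A) = ∫_Z p(A|z) dp(z); and the kernel ELBO L_KELBO = ∫_Z ( ln p_link(z) − λ·‖φ(B(A)) − φ(Ã(z))‖²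 ) dq(z) − KL(q‖p). Assume z ↦ p(A|z) is integrable with respect to p, and that z ↦ ln p_link(z), z ↦ ‖φ(B(A)) − φ(Ã(z))‖², and z ↦ ln p(A|z) are integrable with respect to q. Then ln P(A) ≥ L_KELBO + (l/2)·ln(2λ) − (l/2)·ln(2π). -/

import Mathlib

open Finset MeasureTheory

/-- Density of the one-dimensional Gaussian with mean `μ` and variance `v`. -/
noncomputable def gaussPDF (μ v x : ℝ) : ℝ :=
  (Real.sqrt (2 * Real.pi * v))⁻¹ * Real.exp (-(x - μ) ^ 2 / (2 * v))

/-- Density of the isotropic Gaussian on `ℝ^l` with mean `μ` and covariance `(1/(2λ))·I`. -/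
noncomputable def isoGaussPDF (l : ℕ) (lam : ℝ) (μ x : Fin l → ℝ) : ℝ :=
  ∏ u : Fin l, gaussPDF (μ u) (1 / (2 * lam)) (x u)

/-- The real `0/1` version of a Boolean adjacency matrix. -/
def boolToReal (N : ℕ) (A : Fin N → Fin N → Bool) : Fin N → Fin N → ℝ :=
  fun i j => if A i j then 1 else 0

/-- Independent-edge (link) reconstruction probability of the Boolean adjacency matrix `A`
given the probabilistic adjacency matrix `M`. -/
noncomputable def plink (N : ℕ) (A : Fin N → Fin N → Bool) (M : Fin N → Fin N → ℝ) : ℝ :=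
  ∏ i : Fin N, ∏ j : Fin N, (if A i j then M i j else 1 - M i j)

/-- Normalization constant of the joint (data-augmentation) reconstruction model. -/
noncomputable def normC (N l : ℕ) (lam : ℝ)
    (φ : (Fin N → Fin N → ℝ) → Fin l → ℝ) (M : Fin N → Fin N → ℝ) : ℝ :=
  ∑ A' : Fin N → Fin N → Bool,
    plink N A' M * isoGaussPDF l lam (φ M) (φ (boolToReal N A'))

section AuxLemmas

variable {N l : ℕ} {lam : ℝ}

lemma gaussPDF_pos {μ v x : ℝ} (hv : 0 < v) : 0 < gaussPDF μ v x := by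
  unfold gaussPDF
  have h : 0 < 2 * Real.pi * v := by positivity
  positivity

lemma gaussPDF_le_one {μ v x : ℝ} (hv : 0 < v) (h1 : 1 ≤ 2 * Real.pi * v) :
    gaussPDF μ v x ≤ 1 := by
  unfold gaussPDF
  have h0 : 1 ≤ Real.sqrt (2 * Real.pi * v) := by
    rw [show (1:ℝ) = Real.sqrt 1 by simp]
    exact Real.sqrt_le_sqrt h1
  have hinv : (Real.sqrt (2 * Real.pi * v))⁻¹ ≤ 1 := by
    apply inv_le_one_of_one_le₀ h0
  have hexp : Real.exp (-(x - μ) ^ 2 / (2 * v)) ≤ 1 := by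
    rw [Real.exp_le_one_iff]
    exact div_nonpos_of_nonpos_of_nonneg (neg_nonpos.mpr (sq_nonneg _)) (by positivity)
  exact mul_le_one₀ hinv (Real.exp_pos _).le hexp

lemma log_gaussPDF (hlam : 0 < lam) (μ x : ℝ) :
    Real.log (gaussPDF μ (1 / (2 * lam)) x)
      = (Real.log (2 * lam) - Real.log (2 * Real.pi)) / 2 - lam * (x - μ) ^ 2 := by
  unfold gaussPDF
  have hpi := Real.pi_pos
  have hv : 2 * Real.pi * (1 / (2 * lam)) = Real.pi / lam := by field_simp
  have he : -(x - μ) ^ 2 / (2 * (1 / (2 * lam))) = -(lam * (x - μ) ^ 2) := by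
    field_simp
  rw [hv, he, Real.log_mul (by positivity) (Real.exp_ne_zero _), Real.log_inv,
    Real.log_exp, Real.log_sqrt (by positivity), Real.log_div hpi.ne' hlam.ne',
    Real.log_mul two_ne_zero hlam.ne', Real.log_mul two_ne_zero hpi.ne']
  ring

lemma isoGaussPDF_pos (hlam : 0 < lam) (μ x : Fin l → ℝ) : 0 < isoGaussPDF l lam μ x :=
  Finset.prod_pos fun _ _ => gaussPDF_pos (by positivity)

lemma isoGaussPDF_le_one (hlam : 0 < lam) (hpi : lam ≤ Real.pi) (μ x : Fin l → ℝ) :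
    isoGaussPDF l lam μ x ≤ 1 := by
  apply Finset.prod_le_one (fun u _ => (gaussPDF_pos (by positivity)).le)
  intro u _
  apply gaussPDF_le_one (by positivity)
  have : 2 * Real.pi * (1 / (2 * lam)) = Real.pi / lam := by field_simp
  rw [this, le_div_iff₀ hlam, one_mul]
  exact hpi

lemma log_isoGaussPDF (hlam : 0 < lam) (μ x : Fin l → ℝ) :
    Real.log (isoGaussPDF l lam μ x)
      = (l : ℝ) / 2 * Real.log (2 * lam) - (l : ℝ) / 2 * Real.log (2 * Real.pi)
        - lam * ∑ u : Fin l, (x u - μ u) ^ 2 := by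
  unfold isoGaussPDF
  rw [Real.log_prod (fun u _ => (gaussPDF_pos (by positivity)).ne')]
  simp only [log_gaussPDF hlam]
  rw [Finset.sum_sub_distrib, Finset.sum_const, Finset.card_univ, Fintype.card_fin,
    ← Finset.mul_sum, nsmul_eq_mul]
  ring

lemma plink_pos (A : Fin N → Fin N → Bool) {M : Fin N → Fin N → ℝ}
    (h : ∀ i j, M i j ∈ Set.Ioo (0:ℝ) 1) : 0 < plink N A M := by
  unfold plink
  refine Finset.prod_pos fun i _ => Finset.prod_pos fun j _ => ?_
  rcases h i j with ⟨h0, h1⟩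
  split_ifs <;> linarith

lemma sum_plink (M : Fin N → Fin N → ℝ) :
    ∑ A' : Fin N → Fin N → Bool, plink N A' M = 1 := by
  unfold plink
  rw [← Fintype.piFinset_univ,
    ← Finset.prod_univ_sum (fun _ => (Finset.univ : Finset (Fin N → Bool)))
      (fun i b => ∏ j : Fin N, (if b j then M i j else 1 - M i j))]
  refine Finset.prod_eq_one fun i _ => ?_
  rw [← Fintype.piFinset_univ,
    ← Finset.prod_univ_sum (fun _ => (Finset.univ : Finset Bool))
      (fun j c => if c then M i j else 1 - M i j)]
  refine Finset.prod_eq_one fun j _ => ?_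
  rw [Fintype.sum_bool]
  norm_num

lemma normC_pos (hlam : 0 < lam) (φ : (Fin N → Fin N → ℝ) → Fin l → ℝ)
    {M : Fin N → Fin N → ℝ} (h : ∀ i j, M i j ∈ Set.Ioo (0:ℝ) 1) :
    0 < normC N l lam φ M :=
  Finset.sum_pos
    (fun A' _ => mul_pos (plink_pos A' h) (isoGaussPDF_pos hlam _ _))
    Finset.univ_nonempty

lemma normC_le_one (hlam : 0 < lam) (hpi : lam ≤ Real.pi)
    (φ : (Fin N → Fin N → ℝ) → Fin l → ℝ)
    {M : Fin N → Fin N → ℝ} (h : ∀ i j, M i j ∈ Set.Ioo (0:ℝ) 1) :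
    normC N l lam φ M ≤ 1 := by
  calc normC N l lam φ M
      ≤ ∑ A' : Fin N → Fin N → Bool, plink N A' M * 1 :=
        Finset.sum_le_sum fun A' _ =>
          mul_le_mul_of_nonneg_left (isoGaussPDF_le_one hlam hpi _ _) (plink_pos A' h).le
    _ = 1 := by simp only [mul_one]; exact sum_plink M

lemma measurable_plink (A : Fin N → Fin N → Bool) : Measurable (plink N A) := by
  unfold plink
  refine Finset.measurable_prod _ fun i _ => Finset.measurable_prod _ fun j _ => ?_
  have hM : Measurable fun M : Fin N → Fin N → ℝ => M i j :=
    (measurable_pi_apply j).comp (measurable_pi_apply i)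
  split_ifs
  · exact hM
  · exact measurable_const.sub hM

lemma measurable_isoGaussPDF (lam : ℝ) (x : Fin l → ℝ) :
    Measurable fun μ : Fin l → ℝ => isoGaussPDF l lam μ x := by
  unfold isoGaussPDF gaussPDF
  refine Finset.measurable_prod _ fun u _ => ?_
  exact ((((measurable_const.sub (measurable_pi_apply u)).pow_const 2).neg.div_const
    _).exp).const_mul _

lemma measurable_normC (lam : ℝ) {φ : (Fin N → Fin N → ℝ) → Fin l → ℝ}
    (hφ : Measurable φ) : Measurable (normC N l lam φ) := by
  unfold normC
  exact Finset.measurable_sum _ fun A' _ =>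
    (measurable_plink A').mul ((measurable_isoGaussPDF lam _).comp hφ)

end AuxLemmas

/-- Proposition 1: in the data-augmentation model, the kernel ELBO (plus a constant
independent of the model) lower-bounds the graph log-likelihood:
`ln P(A) ≥ L_KELBO + (l/2)·ln(2λ) − (l/2)·ln(2π)`. -/
theorem kernel_elbo_lower_bounds_log_likelihood {Z : Type*} [MeasurableSpace Z]
    (N l : ℕ) (lam : ℝ) (hlam : 0 < lam) (hlampi : lam ≤ Real.pi)
    (p q : Measure Z) [IsProbabilityMeasure p] [IsProbabilityMeasure q]
    (hac : q ≪ p)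
    (hKL : Integrable (fun z => Real.log ((q.rnDeriv p z).toReal)) q)
    (Atil : Z → Fin N → Fin N → ℝ) (hAtil : Measurable Atil)
    (hAtil01 : ∀ z i j, Atil z i j ∈ Set.Ioo (0 : ℝ) 1)
    (φ : (Fin N → Fin N → ℝ) → Fin l → ℝ) (hφ : Measurable φ)
    (A : Fin N → Fin N → Bool)
    (hint_p : Integrable (fun z =>
        plink N A (Atil z) * isoGaussPDF l lam (φ (Atil z)) (φ (boolToReal N A))
          / normC N l lam φ (Atil z)) p)
    (hint_loglink : Integrable (fun z => Real.log (plink N A (Atil z))) q)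
    (hint_dist : Integrable (fun z =>
        ∑ u : Fin l, (φ (boolToReal N A) u - φ (Atil z) u) ^ 2) q)
    (hint_logjoint : Integrable (fun z => Real.log
        (plink N A (Atil z) * isoGaussPDF l lam (φ (Atil z)) (φ (boolToReal N A))
          / normC N l lam φ (Atil z))) q) :
    Real.log (∫ z,
        plink N A (Atil z) * isoGaussPDF l lam (φ (Atil z)) (φ (boolToReal N A))
          / normC N l lam φ (Atil z) ∂p)
      ≥ ((∫ z, (Real.log (plink N A (Atil z))
              - lam * ∑ u : Fin l, (φ (boolToReal N A) u - φ (Atil z) u) ^ 2) ∂q)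
            - ∫ z, Real.log ((q.rnDeriv p z).toReal) ∂q)
          + (l : ℝ) / 2 * Real.log (2 * lam) - (l : ℝ) / 2 * Real.log (2 * Real.pi) := by
  set f : Z → ℝ := fun z =>
    plink N A (Atil z) * isoGaussPDF l lam (φ (Atil z)) (φ (boolToReal N A))
      / normC N l lam φ (Atil z) with hfdef
  have hfpos : ∀ z, 0 < f z := fun z =>
    div_pos (mul_pos (plink_pos A (hAtil01 z)) (isoGaussPDF_pos hlam _ _))
      (normC_pos hlam φ (hAtil01 z))
  have hfmeas : Measurable f :=
    (((measurable_plink A).mul ((measurable_isoGaussPDF lam _).comp hφ)).div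
      (measurable_normC lam hφ)).comp hAtil
  have hgmeas : Measurable fun z => (q.rnDeriv p z).toReal :=
    (Measure.measurable_rnDeriv q p).ennreal_toReal
  have hint_logjoint' : Integrable (fun z => Real.log (f z)) q := hint_logjoint
  have hint_p' : Integrable f p := hint_p
  -- positivity of the marginal likelihood
  have hI_pos : 0 < ∫ z, f z ∂p := by
    rw [integral_pos_iff_support_of_nonneg (fun z => (hfpos z).le) hint_p']
    have hs : Function.support f = Set.univ := Set.eq_univ_of_forall fun z => (hfpos z).ne'
    rw [hs]
    simp
  set I := ∫ z, f z ∂p with hIdef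
  -- pointwise bound g * (f / g) ≤ f
  have hbd : ∀ z, (q.rnDeriv p z).toReal * (f z / (q.rnDeriv p z).toReal) ≤ f z := by
    intro z
    rcases eq_or_ne ((q.rnDeriv p z).toReal) 0 with h | h
    · simp [h, (hfpos z).le]
    · rw [mul_comm, div_mul_cancel₀ _ h]
  have hnn : ∀ z, 0 ≤ (q.rnDeriv p z).toReal * (f z / (q.rnDeriv p z).toReal) := fun z =>
    mul_nonneg ENNReal.toReal_nonneg (div_nonneg (hfpos z).le ENNReal.toReal_nonneg)
  have hp_side : Integrable (fun z =>
      (q.rnDeriv p z).toReal * (f z / (q.rnDeriv p z).toReal)) p := by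
    refine hint_p'.mono' ((hgmeas.mul (hfmeas.div hgmeas)).aestronglyMeasurable) ?_
    refine Filter.Eventually.of_forall fun z => ?_
    rw [Real.norm_eq_abs, abs_of_nonneg (hnn z)]
    exact hbd z
  have hfg_int : Integrable (fun z => f z / (q.rnDeriv p z).toReal) q := by
    rw [← integrable_rnDeriv_smul_iff hac]
    simpa [smul_eq_mul] using hp_side
  have hle : ∫ z, f z / (q.rnDeriv p z).toReal ∂q ≤ I := by
    rw [← integral_rnDeriv_smul hac
      (f := fun z => f z / (q.rnDeriv p z).toReal)]
    simp only [smul_eq_mul]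
    exact integral_mono hp_side hint_p' hbd
  have hgpos : ∀ᵐ z ∂q, 0 < (q.rnDeriv p z).toReal := by
    filter_upwards [Measure.rnDeriv_pos hac, hac.ae_le (Measure.rnDeriv_lt_top q p)]
      with z h0 hlt
    exact ENNReal.toReal_pos h0.ne' hlt.ne
  -- Jensen / ELBO inequality
  have hjensen : ∫ z, (Real.log (f z) - Real.log ((q.rnDeriv p z).toReal)) ∂q
      ≤ Real.log I := by
    have key : ∀ᵐ z ∂q, Real.log (f z) - Real.log ((q.rnDeriv p z).toReal)
        ≤ f z / (q.rnDeriv p z).toReal / I - 1 + Real.log I := by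
      filter_upwards [hgpos] with z hz
      have h1 : Real.log (f z) - Real.log ((q.rnDeriv p z).toReal)
          = Real.log (f z / (q.rnDeriv p z).toReal) :=
        (Real.log_div (hfpos z).ne' hz.ne').symm
      have h2 : Real.log (f z / (q.rnDeriv p z).toReal / I)
          = Real.log (f z / (q.rnDeriv p z).toReal) - Real.log I :=
        Real.log_div (div_pos (hfpos z) hz).ne' hI_pos.ne'
      have h3 : Real.log (f z / (q.rnDeriv p z).toReal / I)
          ≤ f z / (q.rnDeriv p z).toReal / I - 1 :=
        Real.log_le_sub_one_of_pos (div_pos (div_pos (hfpos z) hz) hI_pos)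
      linarith
    have hlhs : Integrable
        (fun z => Real.log (f z) - Real.log ((q.rnDeriv p z).toReal)) q :=
      hint_logjoint'.sub hKL
    have hrhs : Integrable
        (fun z => f z / (q.rnDeriv p z).toReal / I - 1 + Real.log I) q :=
      ((hfg_int.div_const I).sub (integrable_const 1)).add (integrable_const _)
    calc ∫ z, (Real.log (f z) - Real.log ((q.rnDeriv p z).toReal)) ∂q
        ≤ ∫ z, (f z / (q.rnDeriv p z).toReal / I - 1 + Real.log I) ∂q :=
          integral_mono_ae hlhs hrhs key
      _ = (∫ z, f z / (q.rnDeriv p z).toReal ∂q) / I - 1 + Real.log I := by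
          have hX : Integrable
              (fun z => f z / (q.rnDeriv p z).toReal / I - 1) q :=
            (hfg_int.div_const I).sub (integrable_const 1)
          have hY : Integrable (fun z => f z / (q.rnDeriv p z).toReal / I) q :=
            hfg_int.div_const I
          rw [integral_add hX (integrable_const _),
            integral_sub hY (integrable_const 1), integral_div,
            integral_const, integral_const]
          simp
      _ ≤ I / I - 1 + Real.log I := by gcongr
      _ = Real.log I := by rw [div_self hI_pos.ne']; ring
  -- pointwise lower bound on log f
  have hlogf : ∀ z, Real.log (plink N A (Atil z))
        - lam * ∑ u : Fin l, (φ (boolToReal N A) u - φ (Atil z) u) ^ 2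
        + ((l : ℝ) / 2 * Real.log (2 * lam) - (l : ℝ) / 2 * Real.log (2 * Real.pi))
      ≤ Real.log (f z) := by
    intro z
    have h1 : Real.log (f z)
        = Real.log (plink N A (Atil z))
          + Real.log (isoGaussPDF l lam (φ (Atil z)) (φ (boolToReal N A)))
          - Real.log (normC N l lam φ (Atil z)) := by
      show Real.log (plink N A (Atil z) * isoGaussPDF l lam (φ (Atil z))
          (φ (boolToReal N A)) / normC N l lam φ (Atil z)) = _
      rw [Real.log_div (mul_pos (plink_pos A (hAtil01 z))
          (isoGaussPDF_pos hlam _ _)).ne' (normC_pos hlam φ (hAtil01 z)).ne',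
        Real.log_mul (plink_pos A (hAtil01 z)).ne' (isoGaussPDF_pos hlam _ _).ne']
    have h2 := log_isoGaussPDF hlam (φ (Atil z)) (φ (boolToReal N A))
    have h3 : Real.log (normC N l lam φ (Atil z)) ≤ 0 :=
      Real.log_nonpos (normC_pos hlam φ (hAtil01 z)).le
        (normC_le_one hlam hlampi φ (hAtil01 z))
    rw [h1, h2]
    linarith
  have hint1 : Integrable (fun z => Real.log (plink N A (Atil z))
      - lam * ∑ u : Fin l, (φ (boolToReal N A) u - φ (Atil z) u) ^ 2) q :=
    hint_loglink.sub (hint_dist.const_mul lam)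
  have hstep2 : (∫ z, (Real.log (plink N A (Atil z))
        - lam * ∑ u : Fin l, (φ (boolToReal N A) u - φ (Atil z) u) ^ 2) ∂q)
        + ((l : ℝ) / 2 * Real.log (2 * lam) - (l : ℝ) / 2 * Real.log (2 * Real.pi))
      ≤ ∫ z, Real.log (f z) ∂q := by
    have heq : (∫ z, (Real.log (plink N A (Atil z))
          - lam * ∑ u : Fin l, (φ (boolToReal N A) u - φ (Atil z) u) ^ 2) ∂q)
          + ((l : ℝ) / 2 * Real.log (2 * lam) - (l : ℝ) / 2 * Real.log (2 * Real.pi))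
        = ∫ z, (Real.log (plink N A (Atil z))
            - lam * ∑ u : Fin l, (φ (boolToReal N A) u - φ (Atil z) u) ^ 2
            + ((l : ℝ) / 2 * Real.log (2 * lam)
              - (l : ℝ) / 2 * Real.log (2 * Real.pi))) ∂q := by
      rw [integral_add hint1 (integrable_const _), integral_const]
      simp
    rw [heq]
    exact integral_mono (hint1.add (integrable_const _)) hint_logjoint'
      fun z => hlogf z
  have hsplit : ∫ z, (Real.log (f z) - Real.log ((q.rnDeriv p z).toReal)) ∂q
      = (∫ z, Real.log (f z) ∂q) - ∫ z, Real.log ((q.rnDeriv p z).toReal) ∂q :=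
    integral_sub hint_logjoint' hKL
  rw [ge_iff_le]
  linarith [hjensen, hstep2, hsplit]
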